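/- Let r* = 1/(36√2) and R* = 6√2. Then: (i) for every a ∈ [0, √2] there exists a unique solution h_a ∈ C²₀([0, r*]) of the shifted Cauchy problem with ‖h_a''‖_{C⁰([0,r*])} ≤ R*; (ii) the map a ↦ h_a is Lipschitz from [0, √2] into C²₀([0, r*]): for all a₁, a₂ ∈ [0, √2] one has ‖(h_{a₁} - h_{a₂})''‖_{C⁰([0,r*])} ≤ (37/12)|a₁ - a₂|. -/

import Mathlib

open Set

/-- First derivative within `[0, r]`. -/
noncomputable def d1 (r : ℝ) (f : ℝ → ℝ) : ℝ → ℝ := derivWithin f (Icc 0 r)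

/-- Second derivative within `[0, r]`. -/
noncomputable def d2 (r : ℝ) (f : ℝ → ℝ) : ℝ → ℝ := derivWithin (d1 r f) (Icc 0 r)

/-- `h ∈ C²₀([0,r])` solves the shifted Cauchy problem
`h''(x) = (1 + h'(x)²)[h'(x)(x - 1/x) - h(x) - a]` for `x ∈ (0, r]`,
with `h(0) = h'(0) = 0`. -/
def ShiftedCP (a r : ℝ) (h : ℝ → ℝ) : Prop :=
  ContDiffOn ℝ 2 h (Icc 0 r) ∧ h 0 = 0 ∧ d1 r h 0 = 0 ∧
  ∀ x ∈ Ioc (0:ℝ) r,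
    d2 r h x = (1 + (d1 r h x) ^ 2) * (d1 r h x * (x - 1 / x) - h x - a)

noncomputable def rstar : ℝ := 1 / (36 * Real.sqrt 2)

noncomputable def Rstar : ℝ := 6 * Real.sqrt 2

namespace CPaux

open intervalIntegral MeasureTheory Filter Function

lemma sqrt2_sq : Real.sqrt 2 ^ 2 = 2 := Real.sq_sqrt (by norm_num)

lemma sqrt2_lb : (4/3 : ℝ) ≤ Real.sqrt 2 := by
  nlinarith [sqrt2_sq, Real.sqrt_nonneg 2]

lemma sqrt2_ub : Real.sqrt 2 ≤ (3/2 : ℝ) := by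
  nlinarith [sqrt2_sq, Real.sqrt_nonneg 2]

lemma rstar_pos : (0:ℝ) < rstar := by
  have := sqrt2_lb; rw [rstar]; positivity

lemma rstar_le : rstar ≤ 1/48 := by
  rw [rstar]
  rw [div_le_div_iff₀ (by nlinarith [sqrt2_lb]) (by norm_num)]
  nlinarith [sqrt2_lb]

lemma Rstar_lb : (6:ℝ) ≤ Rstar := by
  have := sqrt2_lb; rw [Rstar]; nlinarith

lemma Rstar_ub : Rstar ≤ 9 := by
  have := sqrt2_ub; rw [Rstar]; nlinarith

lemma Rstar_pos : (0:ℝ) < Rstar := lt_of_lt_of_le (by norm_num) Rstar_lb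

lemma Rstar_mul_rstar : Rstar * rstar = 1/6 := by
  have h : Real.sqrt 2 ≠ 0 := by nlinarith [sqrt2_lb]
  rw [Rstar, rstar]; field_simp; ring

/-- truncation to `[-R*, R*]` -/
noncomputable def tr (y : ℝ) : ℝ := max (-Rstar) (min Rstar y)

lemma tr_continuous : Continuous tr :=
  continuous_const.max (continuous_const.min continuous_id)

lemma abs_tr_le (y : ℝ) : |tr y| ≤ Rstar := by
  rw [abs_le]
  constructor
  · exact le_max_left _ _
  · exact max_le (by linarith [Rstar_pos]) (min_le_left _ _)

lemma tr_eq_of_abs_le {y : ℝ} (h : |y| ≤ Rstar) : tr y = y := by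
  rw [abs_le] at h
  rw [tr, min_eq_right h.2, max_eq_right h.1]

lemma tr_lipschitz (y z : ℝ) : |tr y - tr z| ≤ |y - z| := by
  refine (abs_max_sub_max_le_max _ _ _ _).trans ?_
  refine max_le (by simp [abs_nonneg]) ?_
  calc |min Rstar y - min Rstar z| ≤ max |Rstar - Rstar| |y - z| :=
        abs_min_sub_min_le_max _ _ _ _
    _ ≤ |y - z| := by simp

end CPaux

namespace CPaux
open intervalIntegral MeasureTheory Filter Function
abbrev XX := C(↥(Icc (0:ℝ) rstar), ℝ)

noncomputable def Kf (k : XX) : ℝ → ℝ :=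
  fun t => tr (k (projIcc 0 rstar rstar_pos.le t))

lemma Kf_continuous (k : XX) : Continuous (Kf k) :=
  tr_continuous.comp (k.continuous.comp continuous_projIcc)

lemma abs_Kf_le (k : XX) (t : ℝ) : |Kf k t| ≤ Rstar := abs_tr_le _

lemma Kf_sub_le (k₁ k₂ : XX) (t : ℝ) : |Kf k₁ t - Kf k₂ t| ≤ dist k₁ k₂ := by
  refine (tr_lipschitz _ _).trans ?_
  rw [← Real.dist_eq]
  exact ContinuousMap.dist_apply_le_dist _

lemma Kf_eq {k : XX} (hk : ∀ x, |k x| ≤ Rstar) {t : ℝ} (ht : t ∈ Icc 0 rstar) :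
    Kf k t = k ⟨t, ht⟩ := by
  rw [Kf, projIcc_of_mem rstar_pos.le ht, tr_eq_of_abs_le (hk _)]

/-- generic bound for integrals over `[0,x] ⊆ [0,r*]` -/
lemma abs_integral_le {f : ℝ → ℝ} {C x : ℝ} (hx : x ∈ Icc 0 rstar)
    (h : ∀ t ∈ Icc 0 rstar, |f t| ≤ C) : |∫ t in (0:ℝ)..x, f t| ≤ C * rstar := by
  have hC : 0 ≤ C := (abs_nonneg (f 0)).trans (h 0 ⟨le_rfl, rstar_pos.le⟩)
  have hmem : ∀ t ∈ uIoc (0:ℝ) x, t ∈ Icc 0 rstar := fun t ht => by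
    rw [uIoc_of_le hx.1] at ht
    exact ⟨ht.1.le, ht.2.trans hx.2⟩
  have hb := intervalIntegral.norm_integral_le_of_norm_le_const
    (C := C) (f := f) (a := 0) (b := x)
    (fun t ht => by rw [Real.norm_eq_abs]; exact h t (hmem t ht))
  rw [Real.norm_eq_abs] at hb
  refine hb.trans ?_
  rw [sub_zero, abs_of_nonneg hx.1]
  nlinarith [hx.2]

noncomputable def pf (k : XX) (x : ℝ) : ℝ := ∫ t in (0:ℝ)..x, Kf k t

lemma hasDerivAt_pf (k : XX) (x : ℝ) : HasDerivAt (pf k) (Kf k x) x :=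
  integral_hasDerivAt_right ((Kf_continuous k).intervalIntegrable _ _)
    ((Kf_continuous k).stronglyMeasurableAtFilter _ _) (Kf_continuous k).continuousAt

lemma pf_continuous (k : XX) : Continuous (pf k) :=
  Differentiable.continuous (fun x => (hasDerivAt_pf k x).differentiableAt)

lemma pf_zero (k : XX) : pf k 0 = 0 := integral_same

lemma abs_pf_le (k : XX) {x : ℝ} (hx : x ∈ Icc 0 rstar) : |pf k x| ≤ 1/6 := by
  have := abs_integral_le hx (fun t _ => abs_Kf_le k t)
  rw [Rstar_mul_rstar] at this
  exact this

lemma pf_sub_le (k₁ k₂ : XX) {x : ℝ} (hx : x ∈ Icc 0 rstar) :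
    |pf k₁ x - pf k₂ x| ≤ dist k₁ k₂ * rstar := by
  have hi1 := (Kf_continuous k₁).intervalIntegrable (μ := volume) 0 x
  have hi2 := (Kf_continuous k₂).intervalIntegrable (μ := volume) 0 x
  rw [pf, pf, ← intervalIntegral.integral_sub hi1 hi2]
  exact abs_integral_le hx (fun t _ => Kf_sub_le k₁ k₂ t)

noncomputable def qf (k : XX) (x : ℝ) : ℝ := ∫ t in (0:ℝ)..x, pf k t

lemma hasDerivAt_qf (k : XX) (x : ℝ) : HasDerivAt (qf k) (pf k x) x :=
  integral_hasDerivAt_right ((pf_continuous k).intervalIntegrable _ _)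
    ((pf_continuous k).stronglyMeasurableAtFilter _ _) (pf_continuous k).continuousAt

lemma qf_continuous (k : XX) : Continuous (qf k) :=
  Differentiable.continuous (fun x => (hasDerivAt_qf k x).differentiableAt)

lemma qf_zero (k : XX) : qf k 0 = 0 := integral_same

lemma abs_qf_le (k : XX) {x : ℝ} (hx : x ∈ Icc 0 rstar) : |qf k x| ≤ 1/288 := by
  have := abs_integral_le hx (fun t ht => abs_pf_le k ht)
  refine this.trans ?_
  nlinarith [rstar_le, rstar_pos]

lemma qf_sub_le (k₁ k₂ : XX) {x : ℝ} (hx : x ∈ Icc 0 rstar) :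
    |qf k₁ x - qf k₂ x| ≤ dist k₁ k₂ / 2304 := by
  have hi1 := (pf_continuous k₁).intervalIntegrable (μ := volume) 0 x
  have hi2 := (pf_continuous k₂).intervalIntegrable (μ := volume) 0 x
  rw [qf, qf, ← intervalIntegral.integral_sub hi1 hi2]
  have := abs_integral_le hx (fun t ht => pf_sub_le k₁ k₂ ht)
  refine this.trans ?_
  have hd : (0:ℝ) ≤ dist k₁ k₂ := dist_nonneg
  nlinarith [mul_le_mul_of_nonneg_left rstar_le (mul_nonneg hd rstar_pos.le),
    mul_le_mul_of_nonneg_left rstar_le hd, rstar_pos.le]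

noncomputable def Skf (k : XX) (x : ℝ) : ℝ := ∫ s in (0:ℝ)..1, Kf k (s * x)

lemma Skf_continuous (k : XX) : Continuous (Skf k) := by
  apply intervalIntegral.continuous_parametric_intervalIntegral_of_continuous'
    (f := fun x s => Kf k (s * x)) (μ := volume)
  exact (Kf_continuous k).comp (continuous_snd.mul continuous_fst)

lemma x_mul_Skf (k : XX) (x : ℝ) : x * Skf k x = pf k x := by
  rcases eq_or_ne x 0 with rfl | hx
  · simp [pf_zero]
  · rw [Skf, intervalIntegral.integral_comp_mul_right (fun t => Kf k t) hx]
    rw [pf, smul_eq_mul]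
    rw [zero_mul, one_mul]
    field_simp

lemma abs_Skf_le (k : XX) (x : ℝ) : |Skf k x| ≤ Rstar := by
  have hb := intervalIntegral.norm_integral_le_of_norm_le_const
    (C := Rstar) (f := fun s => Kf k (s * x)) (a := 0) (b := 1)
    (fun t _ => by rw [Real.norm_eq_abs]; exact abs_Kf_le k _)
  rw [Real.norm_eq_abs] at hb
  rw [Skf]; simpa using hb

lemma Skf_sub_le (k₁ k₂ : XX) (x : ℝ) : |Skf k₁ x - Skf k₂ x| ≤ dist k₁ k₂ := by
  have hi1 : IntervalIntegrable (fun s => Kf k₁ (s * x)) volume 0 1 :=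
    ((Kf_continuous k₁).comp (continuous_id.mul continuous_const)).intervalIntegrable _ _
  have hi2 : IntervalIntegrable (fun s => Kf k₂ (s * x)) volume 0 1 :=
    ((Kf_continuous k₂).comp (continuous_id.mul continuous_const)).intervalIntegrable _ _
  rw [Skf, Skf, ← intervalIntegral.integral_sub hi1 hi2]
  have hb := intervalIntegral.norm_integral_le_of_norm_le_const
    (C := dist k₁ k₂) (f := fun s => Kf k₁ (s * x) - Kf k₂ (s * x)) (a := 0) (b := 1)
    (fun t _ => by rw [Real.norm_eq_abs]; exact Kf_sub_le k₁ k₂ _)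
  rw [Real.norm_eq_abs] at hb
  simpa using hb

end CPaux

namespace CPaux
open Set intervalIntegral MeasureTheory Filter Function

lemma mul_abs_le {a b A B : ℝ} (h1 : |a| ≤ A) (h2 : |b| ≤ B) : |a * b| ≤ A * B := by
  rw [abs_mul]
  exact mul_le_mul h1 h2 (abs_nonneg _) ((abs_nonneg a).trans h1)

lemma abs_a_le {a : ℝ} (ha : a ∈ Icc (0:ℝ) (Real.sqrt 2)) : |a| ≤ 3/2 :=
  abs_le.2 ⟨by linarith [ha.1], ha.2.trans sqrt2_ub⟩

noncomputable def Gf (a : ℝ) (k : XX) (x : ℝ) : ℝ :=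
  (1 + pf k x ^ 2) * (pf k x * x - qf k x - a) - pf k x ^ 2 * Skf k x

lemma Gf_continuous (a : ℝ) (k : XX) : Continuous (Gf a k) := by
  have hp := pf_continuous k
  have hq := qf_continuous k
  have hS := Skf_continuous k
  exact ((continuous_const.add (hp.pow 2)).mul
    (((hp.mul continuous_id).sub hq).sub continuous_const)).sub ((hp.pow 2).mul hS)

lemma abs_one_add_pf_sq_le (k : XX) {x : ℝ} (hx : x ∈ Icc 0 rstar) :
    |1 + pf k x ^ 2| ≤ 37/36 := by
  have hp := abs_pf_le k hx
  have h2 : pf k x ^ 2 ≤ (1/6)^2 := by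
    rw [← sq_abs]; exact pow_le_pow_left₀ (abs_nonneg _) hp 2
  rw [abs_of_nonneg (by positivity)]
  nlinarith

lemma abs_affine_le {a : ℝ} (ha : a ∈ Icc (0:ℝ) (Real.sqrt 2)) (k : XX) {x : ℝ}
    (hx : x ∈ Icc 0 rstar) : |pf k x * x - qf k x - a| ≤ 217/144 := by
  have h1 : |pf k x * x| ≤ (1/6) * (1/48) :=
    mul_abs_le (abs_pf_le k hx) (abs_le.2 ⟨by linarith [hx.1], hx.2.trans rstar_le⟩)
  have h2 := abs_qf_le k hx
  have h3 := abs_a_le ha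
  calc |pf k x * x - qf k x - a| ≤ |pf k x * x - qf k x| + |a| := abs_sub _ _
    _ ≤ |pf k x * x| + |qf k x| + |a| := by linarith [abs_sub (pf k x * x) (qf k x)]
    _ ≤ 217/144 := by linarith

lemma abs_Gf_le {a : ℝ} (ha : a ∈ Icc (0:ℝ) (Real.sqrt 2)) (k : XX) {x : ℝ}
    (hx : x ∈ Icc 0 rstar) : |Gf a k x| ≤ 2 := by
  have h1 := mul_abs_le (abs_one_add_pf_sq_le k hx) (abs_affine_le ha k hx)
  have h2 : |pf k x ^ 2 * Skf k x| ≤ (1/36) * 9 := by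
    refine mul_abs_le ?_ ((abs_Skf_le k x).trans Rstar_ub)
    rw [abs_of_nonneg (sq_nonneg _), ← sq_abs]
    exact pow_le_pow_left₀ (abs_nonneg _) (abs_pf_le k hx) 2 |>.trans (by norm_num)
  calc |Gf a k x| ≤ |(1 + pf k x ^ 2) * (pf k x * x - qf k x - a)| +
        |pf k x ^ 2 * Skf k x| := abs_sub _ _
    _ ≤ 2 := by linarith

lemma abs_pf_sq_sub_le (k₁ k₂ : XX) {x : ℝ} (hx : x ∈ Icc 0 rstar) :
    |pf k₁ x ^ 2 - pf k₂ x ^ 2| ≤ dist k₁ k₂ / 144 := by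
  have hδ : (0:ℝ) ≤ dist k₁ k₂ := dist_nonneg
  have hdp : |pf k₁ x - pf k₂ x| ≤ dist k₁ k₂ / 48 := by
    refine (pf_sub_le k₁ k₂ hx).trans ?_
    nlinarith [rstar_le]
  have hsum : |pf k₁ x + pf k₂ x| ≤ 1/3 :=
    (abs_add_le _ _).trans (by linarith [abs_pf_le k₁ hx, abs_pf_le k₂ hx])
  have : pf k₁ x ^ 2 - pf k₂ x ^ 2 = (pf k₁ x + pf k₂ x) * (pf k₁ x - pf k₂ x) := by ring
  rw [this]
  refine (mul_abs_le hsum hdp).trans ?_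
  linarith

lemma Gf_sub_k {a : ℝ} (ha : a ∈ Icc (0:ℝ) (Real.sqrt 2)) (k₁ k₂ : XX) {x : ℝ}
    (hx : x ∈ Icc 0 rstar) : |Gf a k₁ x - Gf a k₂ x| ≤ dist k₁ k₂ / 6 := by
  set δ := dist k₁ k₂ with hδdef
  have hδ : (0:ℝ) ≤ δ := dist_nonneg
  set p₁ := pf k₁ x; set p₂ := pf k₂ x
  set q₁ := qf k₁ x; set q₂ := qf k₂ x
  set S₁ := Skf k₁ x; set S₂ := Skf k₂ x
  have hid : Gf a k₁ x - Gf a k₂ x =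
      (p₁^2 - p₂^2) * (p₁ * x - q₁ - a) + (1 + p₂^2) * ((p₁ - p₂) * x - (q₁ - q₂))
        - (p₁^2 * (S₁ - S₂) + (p₁^2 - p₂^2) * S₂) := by
    simp only [Gf]; ring
  have hdp : |p₁ - p₂| ≤ δ / 48 := by
    refine (pf_sub_le k₁ k₂ hx).trans ?_
    nlinarith [rstar_le]
  have hT1 : |(p₁^2 - p₂^2) * (p₁ * x - q₁ - a)| ≤ (δ/144) * (217/144) :=
    mul_abs_le (abs_pf_sq_sub_le k₁ k₂ hx) (abs_affine_le ha k₁ hx)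
  have hT2in : |(p₁ - p₂) * x - (q₁ - q₂)| ≤ δ/1152 := by
    have h1 : |(p₁ - p₂) * x| ≤ (δ/48) * (1/48) :=
      mul_abs_le hdp (abs_le.2 ⟨by linarith [hx.1], hx.2.trans rstar_le⟩)
    have h2 := qf_sub_le k₁ k₂ hx
    calc |(p₁ - p₂) * x - (q₁ - q₂)| ≤ |(p₁ - p₂) * x| + |q₁ - q₂| := abs_sub _ _
      _ ≤ δ/1152 := by linarith
  have hT2 : |(1 + p₂^2) * ((p₁ - p₂) * x - (q₁ - q₂))| ≤ (37/36) * (δ/1152) :=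
    mul_abs_le (abs_one_add_pf_sq_le k₂ hx) hT2in
  have hT3a : |p₁^2 * (S₁ - S₂)| ≤ (1/36) * δ := by
    refine mul_abs_le ?_ (Skf_sub_le k₁ k₂ x)
    rw [abs_of_nonneg (sq_nonneg _), ← sq_abs]
    exact (pow_le_pow_left₀ (abs_nonneg _) (abs_pf_le k₁ hx) 2).trans (by norm_num)
  have hT3b : |(p₁^2 - p₂^2) * S₂| ≤ (δ/144) * 9 :=
    mul_abs_le (abs_pf_sq_sub_le k₁ k₂ hx) ((abs_Skf_le k₂ x).trans Rstar_ub)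
  calc |Gf a k₁ x - Gf a k₂ x|
      ≤ |(p₁^2 - p₂^2) * (p₁ * x - q₁ - a) + (1 + p₂^2) * ((p₁ - p₂) * x - (q₁ - q₂))|
        + |p₁^2 * (S₁ - S₂) + (p₁^2 - p₂^2) * S₂| := by rw [hid]; exact abs_sub _ _
    _ ≤ |(p₁^2 - p₂^2) * (p₁ * x - q₁ - a)| + |(1 + p₂^2) * ((p₁ - p₂) * x - (q₁ - q₂))|
        + (|p₁^2 * (S₁ - S₂)| + |(p₁^2 - p₂^2) * S₂|) := by
          linarith [abs_add_le ((p₁^2 - p₂^2) * (p₁ * x - q₁ - a))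
            ((1 + p₂^2) * ((p₁ - p₂) * x - (q₁ - q₂))),
            abs_add_le (p₁^2 * (S₁ - S₂)) ((p₁^2 - p₂^2) * S₂)]
    _ ≤ δ / 6 := by linarith

lemma Gf_sub_a (a₁ a₂ : ℝ) (k : XX) {x : ℝ} (hx : x ∈ Icc 0 rstar) :
    |Gf a₁ k x - Gf a₂ k x| ≤ (37/36) * |a₁ - a₂| := by
  have hid : Gf a₁ k x - Gf a₂ k x = (1 + pf k x ^ 2) * (a₂ - a₁) := by
    simp only [Gf]; ring
  rw [hid]
  refine (mul_abs_le (abs_one_add_pf_sq_le k hx) (le_refl |a₂ - a₁|)).trans ?_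
  rw [abs_sub_comm]

end CPaux
namespace CPaux
open Set intervalIntegral MeasureTheory Filter Function

noncomputable def Agf (a : ℝ) (k : XX) (x : ℝ) : ℝ := ∫ s in (0:ℝ)..1, s * Gf a k (s * x)

lemma Agf_continuous (a : ℝ) (k : XX) : Continuous (Agf a k) := by
  apply intervalIntegral.continuous_parametric_intervalIntegral_of_continuous'
    (f := fun x s => s * Gf a k (s * x)) (μ := volume)
  exact continuous_snd.mul ((Gf_continuous a k).comp (continuous_snd.mul continuous_fst))

lemma sq_mul_Agf (a : ℝ) (k : XX) (x : ℝ) :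
    x^2 * Agf a k x = ∫ t in (0:ℝ)..x, t * Gf a k t := by
  rcases eq_or_ne x 0 with rfl | hx
  · simp
  · have hrw : ∀ s : ℝ, s * Gf a k (s * x) = x⁻¹ * ((s * x) * Gf a k (s * x)) := by
      intro s; field_simp
    rw [Agf]
    simp_rw [hrw]
    rw [intervalIntegral.integral_const_mul,
      intervalIntegral.integral_comp_mul_right (fun t => t * Gf a k t) hx]
    rw [smul_eq_mul, zero_mul, one_mul]
    field_simp

lemma smul_mem_Icc {s x : ℝ} (hs : s ∈ uIoc (0:ℝ) 1) (hx : x ∈ Icc 0 rstar) :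
    s * x ∈ Icc 0 rstar := by
  rw [uIoc_of_le (by norm_num : (0:ℝ) ≤ 1)] at hs
  refine ⟨mul_nonneg hs.1.le hx.1, ?_⟩
  have := mul_le_mul hs.2 hx.2 hx.1 zero_le_one
  linarith

lemma abs_s_le {s : ℝ} (hs : s ∈ uIoc (0:ℝ) 1) : |s| ≤ 1 := by
  rw [uIoc_of_le (by norm_num : (0:ℝ) ≤ 1)] at hs
  rw [abs_of_nonneg hs.1.le]; exact hs.2

lemma abs_Agf_le {a : ℝ} (ha : a ∈ Icc (0:ℝ) (Real.sqrt 2)) (k : XX) {x : ℝ}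
    (hx : x ∈ Icc 0 rstar) : |Agf a k x| ≤ 2 := by
  have hb := intervalIntegral.norm_integral_le_of_norm_le_const
    (C := 2) (f := fun s => s * Gf a k (s * x)) (a := 0) (b := 1)
    (fun s hs => by
      rw [Real.norm_eq_abs]
      have := mul_abs_le (abs_s_le hs) (abs_Gf_le ha k (smul_mem_Icc hs hx))
      simpa using this)
  rw [Real.norm_eq_abs] at hb
  rw [Agf]; simpa using hb

lemma Agf_sub_k {a : ℝ} (ha : a ∈ Icc (0:ℝ) (Real.sqrt 2)) (k₁ k₂ : XX) {x : ℝ}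
    (hx : x ∈ Icc 0 rstar) : |Agf a k₁ x - Agf a k₂ x| ≤ dist k₁ k₂ / 6 := by
  have hc1 : Continuous fun s => s * Gf a k₁ (s * x) :=
    continuous_id.mul ((Gf_continuous a k₁).comp (continuous_id.mul continuous_const))
  have hc2 : Continuous fun s => s * Gf a k₂ (s * x) :=
    continuous_id.mul ((Gf_continuous a k₂).comp (continuous_id.mul continuous_const))
  rw [Agf, Agf, ← intervalIntegral.integral_sub (hc1.intervalIntegrable _ _)
    (hc2.intervalIntegrable _ _)]
  have hb := intervalIntegral.norm_integral_le_of_norm_le_const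
    (C := dist k₁ k₂ / 6) (f := fun s => s * Gf a k₁ (s * x) - s * Gf a k₂ (s * x))
    (a := 0) (b := 1)
    (fun s hs => by
      rw [Real.norm_eq_abs]
      have hid : s * Gf a k₁ (s * x) - s * Gf a k₂ (s * x)
          = s * (Gf a k₁ (s * x) - Gf a k₂ (s * x)) := by ring
      have h2 := mul_abs_le (abs_s_le hs) (Gf_sub_k ha k₁ k₂ (smul_mem_Icc hs hx))
      simpa [hid] using h2)
  rw [Real.norm_eq_abs] at hb
  simpa using hb

lemma Agf_sub_a (a₁ a₂ : ℝ) (k : XX) {x : ℝ} (hx : x ∈ Icc 0 rstar) :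
    |Agf a₁ k x - Agf a₂ k x| ≤ (37/36) * |a₁ - a₂| := by
  have hc1 : Continuous fun s => s * Gf a₁ k (s * x) :=
    continuous_id.mul ((Gf_continuous a₁ k).comp (continuous_id.mul continuous_const))
  have hc2 : Continuous fun s => s * Gf a₂ k (s * x) :=
    continuous_id.mul ((Gf_continuous a₂ k).comp (continuous_id.mul continuous_const))
  rw [Agf, Agf, ← intervalIntegral.integral_sub (hc1.intervalIntegrable _ _)
    (hc2.intervalIntegrable _ _)]
  have hb := intervalIntegral.norm_integral_le_of_norm_le_const
    (C := (37/36) * |a₁ - a₂|) (f := fun s => s * Gf a₁ k (s * x) - s * Gf a₂ k (s * x))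
    (a := 0) (b := 1)
    (fun s hs => by
      rw [Real.norm_eq_abs]
      have hid : s * Gf a₁ k (s * x) - s * Gf a₂ k (s * x)
          = s * (Gf a₁ k (s * x) - Gf a₂ k (s * x)) := by ring
      have h2 := mul_abs_le (abs_s_le hs) (Gf_sub_a a₁ a₂ k (smul_mem_Icc hs hx))
      simpa [hid] using h2)
  rw [Real.norm_eq_abs] at hb
  simpa using hb

/-- the Picard-type operator -/
noncomputable def Phi (a : ℝ) (k : XX) : XX :=
  ⟨fun x => Gf a k x.1 - Agf a k x.1,
    (((Gf_continuous a k).comp continuous_subtype_val).sub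
      ((Agf_continuous a k).comp continuous_subtype_val))⟩

lemma Phi_apply (a : ℝ) (k : XX) (x : ↥(Icc (0:ℝ) rstar)) :
    Phi a k x = Gf a k x.1 - Agf a k x.1 := rfl

lemma abs_Phi_le {a : ℝ} (ha : a ∈ Icc (0:ℝ) (Real.sqrt 2)) (k : XX)
    (x : ↥(Icc (0:ℝ) rstar)) : |Phi a k x| ≤ 4 := by
  rw [Phi_apply]
  calc |Gf a k x.1 - Agf a k x.1| ≤ |Gf a k x.1| + |Agf a k x.1| := abs_sub _ _
    _ ≤ 4 := by linarith [abs_Gf_le ha k x.2, abs_Agf_le ha k x.2]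

lemma dist_Phi_k {a : ℝ} (ha : a ∈ Icc (0:ℝ) (Real.sqrt 2)) (k₁ k₂ : XX) :
    dist (Phi a k₁) (Phi a k₂) ≤ (1/3) * dist k₁ k₂ := by
  rw [ContinuousMap.dist_le (by positivity)]
  intro x
  rw [Real.dist_eq, Phi_apply, Phi_apply]
  have h1 := Gf_sub_k ha k₁ k₂ x.2
  have h2 := Agf_sub_k ha k₁ k₂ x.2
  calc |Gf a k₁ x.1 - Agf a k₁ x.1 - (Gf a k₂ x.1 - Agf a k₂ x.1)|
      = |(Gf a k₁ x.1 - Gf a k₂ x.1) - (Agf a k₁ x.1 - Agf a k₂ x.1)| := by ring_nf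
    _ ≤ |Gf a k₁ x.1 - Gf a k₂ x.1| + |Agf a k₁ x.1 - Agf a k₂ x.1| := abs_sub _ _
    _ ≤ (1/3) * dist k₁ k₂ := by linarith

lemma contractPhi {a : ℝ} (ha : a ∈ Icc (0:ℝ) (Real.sqrt 2)) :
    ContractingWith (1/3 : NNReal) (Phi a) := by
  constructor
  · rw [← NNReal.coe_lt_coe]; norm_num
  · apply LipschitzWith.of_dist_le_mul
    intro k₁ k₂
    have : ((1/3 : NNReal) : ℝ) = 1/3 := by norm_num
    rw [this]
    exact dist_Phi_k ha k₁ k₂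

lemma dist_Phi_a (a₁ a₂ : ℝ) (k : XX) :
    dist (Phi a₁ k) (Phi a₂ k) ≤ (37/18) * |a₁ - a₂| := by
  rw [ContinuousMap.dist_le (by positivity)]
  intro x
  rw [Real.dist_eq, Phi_apply, Phi_apply]
  have h1 := Gf_sub_a a₁ a₂ k x.2
  have h2 := Agf_sub_a a₁ a₂ k x.2
  calc |Gf a₁ k x.1 - Agf a₁ k x.1 - (Gf a₂ k x.1 - Agf a₂ k x.1)|
      = |(Gf a₁ k x.1 - Gf a₂ k x.1) - (Agf a₁ k x.1 - Agf a₂ k x.1)| := by ring_nf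
    _ ≤ |Gf a₁ k x.1 - Gf a₂ k x.1| + |Agf a₁ k x.1 - Agf a₂ k x.1| := abs_sub _ _
    _ ≤ (37/18) * |a₁ - a₂| := by linarith

end CPaux
namespace CPaux
open Set intervalIntegral MeasureTheory Filter Function Topology

lemma eq_at_zero {φ ψ : ℝ → ℝ} (hφ : Continuous φ) (hψ : ContinuousOn ψ (Icc 0 rstar))
    (h : ∀ t ∈ Ioc (0:ℝ) rstar, φ t = ψ t) : φ 0 = ψ 0 := by
  have h0 : (0:ℝ) ∈ closure (Ioc (0:ℝ) rstar) := by
    rw [closure_Ioc rstar_pos.ne]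
    exact ⟨le_rfl, rstar_pos.le⟩
  haveI : (𝓝[Ioc (0:ℝ) rstar] (0:ℝ)).NeBot := mem_closure_iff_nhdsWithin_neBot.mp h0
  have T1 : Tendsto ψ (𝓝[Ioc (0:ℝ) rstar] 0) (𝓝 (ψ 0)) :=
    (hψ 0 ⟨le_rfl, rstar_pos.le⟩).mono Ioc_subset_Icc_self
  have T2 : Tendsto φ (𝓝[Ioc (0:ℝ) rstar] 0) (𝓝 (φ 0)) :=
    hφ.continuousAt.continuousWithinAt
  have T2' : Tendsto ψ (𝓝[Ioc (0:ℝ) rstar] 0) (𝓝 (φ 0)) :=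
    T2.congr' (eventuallyEq_of_mem self_mem_nhdsWithin h)
  exact tendsto_nhds_unique T2' T1

lemma ode_algebra {P Q S aa x : ℝ} (hx : x ≠ 0) (hP : x * S = P) :
    (1 + P^2) * (P * (x - 1/x) - Q - aa)
      = ((1 + P^2) * (P * x - Q - aa) - P^2 * S) - S := by
  subst hP
  field_simp
  ring

lemma ftc_icc {f f' : ℝ → ℝ} (hf : ContinuousOn f (Icc 0 rstar))
    (hd : ∀ t ∈ Icc (0:ℝ) rstar, HasDerivWithinAt f (f' t) (Icc 0 rstar) t)
    (hc' : ContinuousOn f' (Icc 0 rstar)) {x : ℝ} (hx : x ∈ Icc 0 rstar) :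
    ∫ t in (0:ℝ)..x, f' t = f x - f 0 := by
  apply intervalIntegral.integral_eq_sub_of_hasDeriv_right_of_le hx.1
  · exact hf.mono (Icc_subset_Icc le_rfl hx.2)
  · intro t ht
    have htm : t ∈ Icc (0:ℝ) rstar := ⟨ht.1.le, ht.2.le.trans hx.2⟩
    exact (hd t htm).mono_of_mem_nhdsWithin
      (Icc_mem_nhdsGT_of_mem ⟨htm.1, lt_of_lt_of_le ht.2 hx.2⟩)
  · refine (hc'.mono ?_).intervalIntegrable
    rw [uIcc_of_le hx.1]
    exact Icc_subset_Icc le_rfl hx.2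

lemma bound_of_fix {a : ℝ} (ha : a ∈ Icc (0:ℝ) (Real.sqrt 2)) {k : XX}
    (hfix : Phi a k = k) : ∀ x, |k x| ≤ Rstar := by
  intro x
  rw [← hfix]
  exact (abs_Phi_le ha k x).trans (by linarith [Rstar_lb])

lemma Kf_fix {a : ℝ} (ha : a ∈ Icc (0:ℝ) (Real.sqrt 2)) {k : XX} (hfix : Phi a k = k)
    {t : ℝ} (ht : t ∈ Icc (0:ℝ) rstar) : Kf k t = Gf a k t - Agf a k t := by
  have h1 : k ⟨t, ht⟩ = (Phi a k) ⟨t, ht⟩ := by rw [hfix]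
  rw [Kf_eq (bound_of_fix ha hfix) ht, h1, Phi_apply]

/-- derivative of `u t = ∫_0^t s G(s) ds - t p(t)` -/
lemma hasDerivAt_u (a : ℝ) (k : XX) (t : ℝ) :
    HasDerivAt (fun y => (∫ s in (0:ℝ)..y, s * Gf a k s) - y * pf k y)
      (t * Gf a k t - (pf k t + t * Kf k t)) t := by
  have hGc : Continuous (fun s => s * Gf a k s) := continuous_id.mul (Gf_continuous a k)
  have h1 : HasDerivAt (fun y => ∫ s in (0:ℝ)..y, s * Gf a k s) (t * Gf a k t) t :=
    integral_hasDerivAt_right (hGc.intervalIntegrable _ _)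
      (hGc.stronglyMeasurableAtFilter _ _) hGc.continuousAt
  have h2 : HasDerivAt (fun y => y * pf k y) (1 * pf k t + t * Kf k t) t :=
    (hasDerivAt_id t).mul (hasDerivAt_pf k t)
  have : HasDerivAt (fun y => (∫ s in (0:ℝ)..y, s * Gf a k s) - y * pf k y)
      (t * Gf a k t - (1 * pf k t + t * Kf k t)) t := h1.sub h2
  convert this using 1
  ring

lemma u_eq (a : ℝ) (k : XX) (t : ℝ) :
    (∫ s in (0:ℝ)..t, s * Gf a k s) - t * pf k t
      = t * (t * Agf a k t - pf k t) := by
  rw [← sq_mul_Agf a k t]; ring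

lemma Agf_eq_Skf_fix {a : ℝ} (ha : a ∈ Icc (0:ℝ) (Real.sqrt 2)) {k : XX}
    (hfix : Phi a k = k) : ∀ x ∈ Ioc (0:ℝ) rstar, Agf a k x = Skf k x := by
  set u : ℝ → ℝ := fun y => (∫ s in (0:ℝ)..y, s * Gf a k s) - y * pf k y with hu_def
  set v : ℝ → ℝ := fun y => y * Agf a k y - pf k y with hv_def
  have huv : ∀ t, u t = t * v t := fun t => u_eq a k t
  have hvc : Continuous v := (continuous_id.mul (Agf_continuous a k)).sub (pf_continuous k)
  have hv0 : ∀ t, 0 < t → t < rstar → HasDerivAt v 0 t := by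
    intro t ht0 htr
    have hK : Kf k t = Gf a k t - Agf a k t := Kf_fix ha hfix ⟨ht0.le, htr.le⟩
    have hu' : HasDerivAt u (v t) t := by
      have h := hasDerivAt_u a k t
      convert h using 1
      rw [hK]
      simp only [hv_def]
      ring
    have hq : HasDerivAt (fun s => u s / s) ((v t * t - u t * 1) / t ^ 2) t :=
      hu'.div (hasDerivAt_id t) ht0.ne'
    have hval : (v t * t - u t * 1) / t ^ 2 = 0 := by
      rw [huv t]; field_simp; ring
    have hev : (fun s => u s / s) =ᶠ[nhds t] v := by
      filter_upwards [isOpen_ne.mem_nhds ht0.ne'] with s hs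
      rw [huv s]
      field_simp
    have h2 := hq.congr_of_eventuallyEq hev.symm
    rwa [hval] at h2
  have hconst : ∀ y x : ℝ, 0 < y → y ≤ x → x ≤ rstar → v x = v y := by
    intro y x hy hyx hxr
    have h := constant_of_has_deriv_right_zero (f := v) (a := y) (b := x)
      hvc.continuousOn
      (fun t ht => (hv0 t (lt_of_lt_of_le hy ht.1) (lt_of_lt_of_le ht.2 hxr)).hasDerivWithinAt)
    exact h x ⟨hyx, le_rfl⟩
  have hv_zero : ∀ x ∈ Ioc (0:ℝ) rstar, v x = 0 := by
    intro x hx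
    have h0 : (0:ℝ) ∈ closure (Ioc (0:ℝ) x) := by
      rw [closure_Ioc hx.1.ne]
      exact ⟨le_rfl, hx.1.le⟩
    haveI : (𝓝[Ioc (0:ℝ) x] (0:ℝ)).NeBot := mem_closure_iff_nhdsWithin_neBot.mp h0
    have T1 : Tendsto v (𝓝[Ioc (0:ℝ) x] 0) (𝓝 (v 0)) :=
      hvc.continuousAt.continuousWithinAt
    have T2 : Tendsto v (𝓝[Ioc (0:ℝ) x] 0) (𝓝 (v x)) := by
      have hc : Tendsto (fun _ : ℝ => v x) (𝓝[Ioc (0:ℝ) x] 0) (𝓝 (v x)) :=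
        tendsto_const_nhds
      refine Tendsto.congr' ?_ hc
      filter_upwards [self_mem_nhdsWithin] with y hy
      exact hconst y x hy.1 hy.2 hx.2
    have hx0 : v x = v 0 := tendsto_nhds_unique T2 T1
    rw [hx0]
    simp [hv_def, pf_zero]
  intro x hx
  have h1 := hv_zero x hx
  have h2 := x_mul_Skf k x
  have hxne : x ≠ 0 := hx.1.ne'
  apply mul_left_cancel₀ hxne
  simp only [hv_def] at h1
  linarith

lemma Kode_fix {a : ℝ} (ha : a ∈ Icc (0:ℝ) (Real.sqrt 2)) {k : XX} (hfix : Phi a k = k)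
    {x : ℝ} (hx : x ∈ Ioc (0:ℝ) rstar) :
    Kf k x = (1 + pf k x ^ 2) * (pf k x * (x - 1/x) - qf k x - a) := by
  rw [Kf_fix ha hfix ⟨hx.1.le, hx.2⟩, Agf_eq_Skf_fix ha hfix x hx]
  have h := ode_algebra (P := pf k x) (Q := qf k x) (aa := a) hx.1.ne' (x_mul_Skf k x)
  simp only [Gf]
  linarith [h]

end CPaux
namespace CPaux
open Set intervalIntegral MeasureTheory Filter Function Topology

lemma contDiff_qf (k : XX) : ContDiff ℝ 2 (qf k) := by
  have hdp : deriv (pf k) = Kf k := funext fun x => (hasDerivAt_pf k x).deriv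
  have h1 : ContDiff ℝ 1 (pf k) := contDiff_one_iff_deriv.mpr
    ⟨fun x => (hasDerivAt_pf k x).differentiableAt, by rw [hdp]; exact Kf_continuous k⟩
  have hdq : deriv (qf k) = pf k := funext fun x => (hasDerivAt_qf k x).deriv
  have h2 : ContDiff ℝ (1 + 1) (qf k) := contDiff_succ_iff_deriv.mpr
    ⟨fun x => (hasDerivAt_qf k x).differentiableAt,
     by intro h; exact absurd h (by norm_num),
     by rw [hdq]; exact h1⟩
  exact h2.of_le (by norm_num)

lemma d1_qf (k : XX) {x : ℝ} (hx : x ∈ Icc (0:ℝ) rstar) : d1 rstar (qf k) x = pf k x := by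
  rw [d1]
  exact ((hasDerivAt_qf k x).hasDerivWithinAt).derivWithin (uniqueDiffOn_Icc rstar_pos x hx)

lemma d2_qf (k : XX) {x : ℝ} (hx : x ∈ Icc (0:ℝ) rstar) : d2 rstar (qf k) x = Kf k x := by
  rw [d2, derivWithin_congr (fun y hy => d1_qf k hy) (d1_qf k hx)]
  exact ((hasDerivAt_pf k x).hasDerivWithinAt).derivWithin (uniqueDiffOn_Icc rstar_pos x hx)

/-- the fixed point yields a solution -/
lemma sol_of_fix {a : ℝ} (ha : a ∈ Icc (0:ℝ) (Real.sqrt 2)) {k : XX}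
    (hfix : Phi a k = k) :
    ShiftedCP a rstar (qf k) ∧ ∀ x ∈ Icc (0:ℝ) rstar, |d2 rstar (qf k) x| ≤ Rstar := by
  constructor
  · refine ⟨(contDiff_qf k).contDiffOn, qf_zero k, ?_, ?_⟩
    · rw [d1_qf k ⟨le_rfl, rstar_pos.le⟩, pf_zero]
    · intro x hx
      have hxI : x ∈ Icc (0:ℝ) rstar := ⟨hx.1.le, hx.2⟩
      rw [d2_qf k hxI, d1_qf k hxI]
      exact Kode_fix ha hfix hx
  · intro x hx
    rw [d2_qf k hx]
    exact abs_Kf_le k x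

/-- a solution yields a fixed point -/
lemma fix_of_sol {a : ℝ} (ha : a ∈ Icc (0:ℝ) (Real.sqrt 2)) {g : ℝ → ℝ}
    (hg : ShiftedCP a rstar g) (hb : ∀ x ∈ Icc (0:ℝ) rstar, |d2 rstar g x| ≤ Rstar) :
    ∃ k : XX, Phi a k = k ∧ ∀ x ∈ Icc (0:ℝ) rstar, g x = qf k x := by
  obtain ⟨hCD, hg0, hd10, hode⟩ := hg
  have hUD : UniqueDiffOn ℝ (Icc (0:ℝ) rstar) := uniqueDiffOn_Icc rstar_pos
  have hd1CD : ContDiffOn ℝ 1 (d1 rstar g) (Icc 0 rstar) := by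
    rw [d1]
    exact hCD.derivWithin hUD (by norm_num)
  have hd1c : ContinuousOn (d1 rstar g) (Icc 0 rstar) := hd1CD.continuousOn
  have hd2c : ContinuousOn (d2 rstar g) (Icc 0 rstar) := by
    rw [d2]
    exact hd1CD.continuousOn_derivWithin hUD le_rfl
  have hgc : ContinuousOn g (Icc 0 rstar) := hCD.continuousOn
  have hgd : ∀ t ∈ Icc (0:ℝ) rstar, HasDerivWithinAt g (d1 rstar g t) (Icc 0 rstar) t :=
    fun t ht => (hCD.differentiableOn (by norm_num) t ht).hasDerivWithinAt
  have hd1d : ∀ t ∈ Icc (0:ℝ) rstar,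
      HasDerivWithinAt (d1 rstar g) (d2 rstar g t) (Icc 0 rstar) t :=
    fun t ht => (hd1CD.differentiableOn (by norm_num) t ht).hasDerivWithinAt
  set k : XX := ⟨(Icc (0:ℝ) rstar).restrict (d2 rstar g), hd2c.restrict⟩ with hk_def
  have hkR : ∀ x : ↥(Icc (0:ℝ) rstar), |k x| ≤ Rstar := fun x => hb x.1 x.2
  have hK : ∀ t ∈ Icc (0:ℝ) rstar, Kf k t = d2 rstar g t := fun t ht => by
    rw [Kf_eq hkR ht]; rfl
  have hp : ∀ x ∈ Icc (0:ℝ) rstar, pf k x = d1 rstar g x := by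
    intro x hx
    have h1 : pf k x = ∫ t in (0:ℝ)..x, d2 rstar g t := by
      refine intervalIntegral.integral_congr (fun t ht => ?_)
      rw [uIcc_of_le hx.1] at ht
      exact hK t ⟨ht.1, ht.2.trans hx.2⟩
    rw [h1, ftc_icc hd1c hd1d hd2c hx, hd10, sub_zero]
  have hq : ∀ x ∈ Icc (0:ℝ) rstar, qf k x = g x := by
    intro x hx
    have h1 : qf k x = ∫ t in (0:ℝ)..x, d1 rstar g t := by
      refine intervalIntegral.integral_congr (fun t ht => ?_)
      rw [uIcc_of_le hx.1] at ht
      exact hp t ⟨ht.1, ht.2.trans hx.2⟩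
    rw [h1, ftc_icc hgc hgd hd1c hx, hg0, sub_zero]
  have hKode : ∀ x ∈ Ioc (0:ℝ) rstar, Kf k x = Gf a k x - Skf k x := by
    intro x hx
    have hxI : x ∈ Icc (0:ℝ) rstar := ⟨hx.1.le, hx.2⟩
    rw [hK x hxI, hode x hx, ← hp x hxI, ← hq x hxI]
    simp only [Gf]
    exact ode_algebra hx.1.ne' (x_mul_Skf k x)
  -- the integral identity x * pf = ∫ t G  on [0, r*]
  have hu_zero : ∀ x ∈ Icc (0:ℝ) rstar,
      (∫ s in (0:ℝ)..x, s * Gf a k s) - x * pf k x = 0 := by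
    intro x hx
    set u : ℝ → ℝ := fun y => (∫ s in (0:ℝ)..y, s * Gf a k s) - y * pf k y with hu_def
    have hderiv : ∀ t ∈ Ico (0:ℝ) x, HasDerivWithinAt u 0 (Ici t) t := by
      intro t ht
      have h := hasDerivAt_u a k t
      have hval : t * Gf a k t - (pf k t + t * Kf k t) = 0 := by
        rcases eq_or_lt_of_le ht.1 with h0 | h0
        · rw [← h0]
          simp [pf_zero]
        · have htI : t ∈ Ioc (0:ℝ) rstar := ⟨h0, ht.2.le.trans hx.2⟩
          rw [hKode t htI]
          have := x_mul_Skf k t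
          ring_nf
          linarith [x_mul_Skf k t]
      rw [hval] at h
      exact h.hasDerivWithinAt
    have hcont : ContinuousOn u (Icc 0 x) := by
      have : Continuous u := (intervalIntegral.continuous_parametric_intervalIntegral_of_continuous
        (f := fun _ s => s * Gf a k s) (μ := volume)
        (continuous_snd.mul ((Gf_continuous a k).comp continuous_snd)) continuous_id).sub
        (continuous_id.mul (pf_continuous k))
      exact this.continuousOn
    have := constant_of_has_deriv_right_zero hcont hderiv x ⟨hx.1, le_rfl⟩
    simpa [hu_def, pf_zero] using this
  have hAS : ∀ x ∈ Ioc (0:ℝ) rstar, Agf a k x = Skf k x := by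
    intro x hx
    have h1 := hu_zero x ⟨hx.1.le, hx.2⟩
    have h2 := sq_mul_Agf a k x
    have h3 := x_mul_Skf k x
    have hxne : x ≠ 0 := hx.1.ne'
    have h4 : x * (x * Agf a k x) = x * (x * Skf k x) := by
      calc x * (x * Agf a k x) = x^2 * Agf a k x := by ring
        _ = ∫ s in (0:ℝ)..x, s * Gf a k s := h2
        _ = x * pf k x := by linarith [h1]
        _ = x * (x * Skf k x) := by rw [h3]
    exact mul_left_cancel₀ hxne (mul_left_cancel₀ hxne h4)
  have hfix : Phi a k = k := by
    ext x
    rw [Phi_apply]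
    have hioc : ∀ t ∈ Ioc (0:ℝ) rstar, Gf a k t - Agf a k t = d2 rstar g t := by
      intro t ht
      rw [hAS t ht, ← hKode t ht, hK t ⟨ht.1.le, ht.2⟩]
    have hkx : k x = d2 rstar g x.1 := rfl
    rcases eq_or_lt_of_le x.2.1 with h0 | h0
    · have := eq_at_zero ((Gf_continuous a k).sub (Agf_continuous a k)) hd2c hioc
      rw [hkx, ← h0]
      exact this
    · rw [hkx]
      exact hioc x.1 ⟨h0, x.2.2⟩
  exact ⟨k, hfix, fun x hx => (hq x hx).symm⟩

end CPaux
namespace CPaux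
open Set intervalIntegral MeasureTheory Filter Function Topology

noncomputable def fixk (a : ℝ) : XX :=
  if ha : a ∈ Icc (0:ℝ) (Real.sqrt 2) then
    ContractingWith.fixedPoint (Phi a) (contractPhi ha) else 0

lemma fixk_fix {a : ℝ} (ha : a ∈ Icc (0:ℝ) (Real.sqrt 2)) : Phi a (fixk a) = fixk a := by
  rw [fixk, dif_pos ha]
  exact (contractPhi ha).fixedPoint_isFixedPt

lemma fixk_unique {a : ℝ} (ha : a ∈ Icc (0:ℝ) (Real.sqrt 2)) {k : XX}
    (hk : Phi a k = k) : k = fixk a := by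
  rw [fixk, dif_pos ha]
  exact (contractPhi ha).fixedPoint_unique hk

lemma fixk_dist {a₁ a₂ : ℝ} (ha₁ : a₁ ∈ Icc (0:ℝ) (Real.sqrt 2))
    (ha₂ : a₂ ∈ Icc (0:ℝ) (Real.sqrt 2)) :
    dist (fixk a₁) (fixk a₂) ≤ 37/12 * |a₁ - a₂| := by
  rw [fixk, dif_pos ha₁, fixk, dif_pos ha₂]
  have h := (contractPhi ha₁).fixedPoint_lipschitz_in_map (g := Phi a₂)
    (contractPhi ha₂) (C := 37/18 * |a₁ - a₂|) (fun k => dist_Phi_a a₁ a₂ k)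
  refine h.trans ?_
  have hc : (1 : ℝ) - ((1/3 : NNReal) : ℝ) = 2/3 := by
    norm_num
  rw [hc]
  rw [div_le_iff₀ (by norm_num : (0:ℝ) < 2/3)]
  have : (0:ℝ) ≤ |a₁ - a₂| := abs_nonneg _
  nlinarith

end CPaux


/-- (i) For every `a ∈ [0, √2]` there is a unique solution `h_a ∈ C²₀([0, r*])` of the
shifted Cauchy problem with `‖h_a''‖_{C⁰([0,r*])} ≤ R*`, where `r* = 1/(36√2)`, `R* = 6√2`;
(ii) the map `a ↦ h_a` is Lipschitz: `‖(h_{a₁} - h_{a₂})''‖_{C⁰([0,r*])} ≤ (37/12)|a₁ - a₂|`. -/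
theorem shifted_CP_lipschitz_in_a :
    ∃ H : ℝ → ℝ → ℝ,
      (∀ a ∈ Icc (0:ℝ) (Real.sqrt 2),
        (ShiftedCP a rstar (H a) ∧ ∀ x ∈ Icc (0:ℝ) rstar, |d2 rstar (H a) x| ≤ Rstar) ∧
        ∀ h' : ℝ → ℝ,
          (ShiftedCP a rstar h' ∧ ∀ x ∈ Icc (0:ℝ) rstar, |d2 rstar h' x| ≤ Rstar) →
          EqOn h' (H a) (Icc 0 rstar)) ∧
      ∀ a₁ ∈ Icc (0:ℝ) (Real.sqrt 2), ∀ a₂ ∈ Icc (0:ℝ) (Real.sqrt 2),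
        ∀ x ∈ Icc (0:ℝ) rstar,
          |d2 rstar (H a₁) x - d2 rstar (H a₂) x| ≤ 37 / 12 * |a₁ - a₂| := by
  refine ⟨fun a => CPaux.qf (CPaux.fixk a), ?_, ?_⟩
  · intro a ha
    constructor
    · exact CPaux.sol_of_fix ha (CPaux.fixk_fix ha)
    · intro g hg
      obtain ⟨k, hk, hgk⟩ := CPaux.fix_of_sol ha hg.1 hg.2
      have hke := CPaux.fixk_unique ha hk
      intro x hx
      rw [hgk x hx, hke]
  · intro a₁ ha₁ a₂ ha₂ x hx
    have h1 : d2 rstar (CPaux.qf (CPaux.fixk a₁)) x = (CPaux.fixk a₁) ⟨x, hx⟩ := by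
      rw [CPaux.d2_qf _ hx, CPaux.Kf_eq (CPaux.bound_of_fix ha₁ (CPaux.fixk_fix ha₁)) hx]
    have h2 : d2 rstar (CPaux.qf (CPaux.fixk a₂)) x = (CPaux.fixk a₂) ⟨x, hx⟩ := by
      rw [CPaux.d2_qf _ hx, CPaux.Kf_eq (CPaux.bound_of_fix ha₂ (CPaux.fixk_fix ha₂)) hx]
    rw [h1, h2]
    have h3 := ContinuousMap.dist_apply_le_dist
      (f := CPaux.fixk a₁) (g := CPaux.fixk a₂) ⟨x, hx⟩
    rw [Real.dist_eq] at h3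
    exact h3.trans (CPaux.fixk_dist ha₁ ha₂)
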